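/- For every h ≥ 0 and 0 < r < 1, setting D = the closed Euclidean disc of radius r centered at (1−r, h) and p = (1, h), there exists a solid ellipse E centered at the origin with p ∈ ∂E and E contained in the convex hull of (−D) ∪ D. -/

import Mathlib

/-- For `h ≥ 0` and `0 < r < 1`, with `D` the closed disc of radius `r` centered at
`(1-r, h)` and `p = (1, h)`, there is a solid ellipse `{Ax² + By² + Cxy ≤ 1}` centered at
the origin passing through `p` and contained in the convex hull of `(-D) ∪ D`. -/
theorem stmt12 (h r : ℝ) (hh : 0 ≤ h) (hr0 : 0 < r) (hr1 : r < 1) :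
    ∃ A B C : ℝ,
      (∀ v : EuclideanSpace ℝ (Fin 2), v ≠ 0 →
        0 < A * v 0 ^ 2 + B * v 1 ^ 2 + C * (v 0 * v 1)) ∧
      A * 1 ^ 2 + B * h ^ 2 + C * (1 * h) = 1 ∧
      {v : EuclideanSpace ℝ (Fin 2) | A * v 0 ^ 2 + B * v 1 ^ 2 + C * (v 0 * v 1) ≤ 1} ⊆
        convexHull ℝ
          ((-(Metric.closedBall ((WithLp.equiv 2 (Fin 2 → ℝ)).symm ![1 - r, h]) r)) ∪
            Metric.closedBall ((WithLp.equiv 2 (Fin 2 → ℝ)).symm ![1 - r, h]) r) := by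
  have hr2 : (0:ℝ) < r ^ 2 := by positivity
  refine ⟨1 + h ^ 2 / r ^ 2, 1 / r ^ 2, -(2 * h) / r ^ 2, ?_, by field_simp; ring, ?_⟩
  · intro v hv
    have key : (1 + h ^ 2 / r ^ 2) * v 0 ^ 2 + 1 / r ^ 2 * v 1 ^ 2 +
        -(2 * h) / r ^ 2 * (v 0 * v 1) = v 0 ^ 2 + ((v 1 - h * v 0) / r) ^ 2 := by
      field_simp; ring
    rw [key]
    rcases eq_or_ne (v 0) 0 with h0 | h0
    · have h1 : v 1 ≠ 0 := by
        intro h1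
        exact hv (by ext i; fin_cases i <;> simp [h0, h1])
      have h2 : (v 1 - h * v 0) / r ≠ 0 := by
        rw [h0]; simp [h1, hr0.ne', sub_eq_zero]
      have := sq_pos_of_ne_zero h2
      nlinarith [sq_nonneg (v 0)]
    · have := sq_pos_of_ne_zero h0
      nlinarith [sq_nonneg ((v 1 - h * v 0) / r)]
  · intro v hv
    simp only [Set.mem_setOf_eq] at hv
    have e : r ^ 2 * ((1 + h ^ 2 / r ^ 2) * v 0 ^ 2 + 1 / r ^ 2 * v 1 ^ 2 +
        -(2 * h) / r ^ 2 * (v 0 * v 1)) = r ^ 2 * v 0 ^ 2 + (v 1 - h * v 0) ^ 2 := by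
      field_simp; ring
    have key2 : r ^ 2 * v 0 ^ 2 + (v 1 - h * v 0) ^ 2 ≤ r ^ 2 := by
      rw [← e]
      calc r ^ 2 * _ ≤ r ^ 2 * 1 := by
            exact mul_le_mul_of_nonneg_left hv hr2.le
        _ = r ^ 2 := mul_one _
    have hv2 : v 0 ^ 2 ≤ 1 := by nlinarith [sq_nonneg (v 1 - h * v 0)]
    have hx1 : v 0 ≤ 1 := by nlinarith [sq_nonneg (v 0 - 1)]
    have hx2 : -1 ≤ v 0 := by nlinarith [sq_nonneg (v 0 + 1)]
    set c : EuclideanSpace ℝ (Fin 2) := (WithLp.equiv 2 (Fin 2 → ℝ)).symm ![1 - r, h] with hc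
    set a : EuclideanSpace ℝ (Fin 2) :=
      (WithLp.equiv 2 (Fin 2 → ℝ)).symm ![1 - r + r * v 0, h + (v 1 - h * v 0)] with hadef
    set b : EuclideanSpace ℝ (Fin 2) :=
      (WithLp.equiv 2 (Fin 2 → ℝ)).symm ![-(1 - r) + r * v 0, -h + (v 1 - h * v 0)] with hbdef
    have hdist : ∀ w : EuclideanSpace ℝ (Fin 2),
        (w 0 - c 0) ^ 2 + (w 1 - c 1) ^ 2 ≤ r ^ 2 → w ∈ Metric.closedBall c r := by
      intro w hw
      rw [Metric.mem_closedBall, EuclideanSpace.dist_eq]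
      rw [show r = Real.sqrt (r ^ 2) from (Real.sqrt_sq hr0.le).symm]
      apply Real.sqrt_le_sqrt
      simpa [Fin.sum_univ_two, Real.dist_eq, sq_abs] using hw
    have ha : a ∈ Metric.closedBall c r := by
      apply hdist
      simp only [hadef, hc, WithLp.equiv_symm_apply, PiLp.toLp_apply, Matrix.cons_val_zero,
        Matrix.cons_val_one, Matrix.head_cons]
      ring_nf
      nlinarith [key2]
    have hb : b ∈ -(Metric.closedBall c r) := by
      rw [Set.mem_neg]
      apply hdist
      simp only [hbdef, hc, WithLp.equiv_symm_apply, PiLp.toLp_apply, Matrix.cons_val_zero,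
        Matrix.cons_val_one, Matrix.head_cons, PiLp.neg_apply]
      ring_nf
      nlinarith [key2]
    have hseg : v ∈ segment ℝ b a := by
      refine ⟨(1 - v 0) / 2, (1 + v 0) / 2, by linarith, by linarith, by ring, ?_⟩
      ext i
      fin_cases i <;>
        simp [hadef, hbdef, PiLp.add_apply, PiLp.smul_apply, smul_eq_mul] <;> ring
    have hb' : b ∈ (-(Metric.closedBall c r) ∪ Metric.closedBall c r) := Or.inl hb
    have ha' : a ∈ (-(Metric.closedBall c r) ∪ Metric.closedBall c r) := Or.inr ha
    exact segment_subset_convexHull hb' ha' hseg
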